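/- Let A be a basic finite-dimensional algebra over a field k with simple left A-modules S(1), …, S(n) (a complete set of representatives of isomorphism classes). If the socle of the left module A is isomorphic to a submodule of S(1) ⊕ ⋯ ⊕ S(n), then A is self-injective. -/

import Mathlib

universe u

/-- The socle of a module: the sum of all its simple submodules. -/
def socle (R : Type u) [Ring R] (M : Type u) [AddCommGroup M] [Module R M] :
    Submodule R M :=
  sSup {W : Submodule R M | IsSimpleModule R W}

/-- A finite-dimensional algebra is basic if `A / rad A` is a direct sum of pairwise
non-isomorphic simple left `A`-modules. -/
def IsBasic (A : Type u) [Ring A] : Prop :=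
  ∃ (m : ℕ) (T : Fin m → Submodule A (A ⧸ ((⊥ : Ideal A).jacobson))),
    (∀ i, IsSimpleModule A (T i)) ∧
    (∀ i j, i ≠ j → IsEmpty (T i ≃ₗ[A] T j)) ∧
    iSupIndep T ∧ iSup T = ⊤


section SimpleAux

variable {A : Type u} [Ring A]

/-- A simple submodule contained in a supremum of simple submodules is
isomorphic to one of them. -/
theorem aux_simple_le_biSup {M : Type u} {ι : Type*} [AddCommGroup M] [Module A M]
    (s : Set ι) (V : ι → Submodule A M)
    (hs : ∀ j ∈ s, IsSimpleModule A (V j)) (U : Submodule A M) (hU : IsSimpleModule A U)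
    (hle : U ≤ ⨆ j ∈ s, V j) : ∃ j ∈ s, Nonempty (U ≃ₗ[A] V j) := by
  set N : Submodule A M := ⨆ j ∈ s, V j with hN
  haveI : IsSemisimpleModule A N :=
    isSemisimpleModule_biSup_of_isSemisimpleModule_submodule
      (fun j hj => haveI := hs j hj; inferInstance)
  have hUN : U ≤ LinearMap.range N.subtype := by
    simpa only [Submodule.range_subtype] using hle
  set U' : Submodule A N := U.comap N.subtype with hU'
  let e0 : U' ≃ₗ[A] U := U.comap_equiv_self_of_inj_of_le N.injective_subtype hUN
  haveI : IsSimpleModule A U := hU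
  haveI hU's : IsSimpleModule A U' := IsSimpleModule.congr e0
  obtain ⟨C, hC⟩ := exists_isCompl U'
  set π : N →ₗ[A] U' := Submodule.projectionOnto U' C hC with hπdef
  set p' : ι → Submodule A N := fun j => (V j).comap N.subtype with hp'
  have hVleN : ∀ j ∈ s, V j ≤ LinearMap.range N.subtype := fun j hj => by
    simpa only [Submodule.range_subtype] using le_biSup V hj
  have hp2 : ⨆ j ∈ s, p' j = ⊤ := by
    apply Submodule.map_injective_of_injective N.injective_subtype
    simp_rw [Submodule.map_top, Submodule.range_subtype, Submodule.map_iSup]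
    exact biSup_congr fun j hj => Submodule.map_comap_eq_of_le (hVleN j hj)
  haveI : Nontrivial U' := hU's.nontrivial
  obtain ⟨u, hu⟩ := exists_ne (0 : U')
  have hex : ∃ j ∈ s, ∃ x ∈ p' j, π x ≠ 0 := by
    by_contra hcon
    push_neg at hcon
    have hsub : ∀ j ∈ s, p' j ≤ LinearMap.ker π := fun j hj x hx => hcon j hj x hx
    have htop : (⊤ : Submodule A N) ≤ LinearMap.ker π := hp2 ▸ iSup₂_le hsub
    have h0 : π (u : N) = 0 := htop Submodule.mem_top
    rw [Submodule.projectionOnto_apply_left] at h0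
    exact hu h0
  obtain ⟨j, hjs, x, hx, hπx⟩ := hex
  haveI : IsSimpleModule A (V j) := hs j hjs
  let ej : p' j ≃ₗ[A] V j :=
    (V j).comap_equiv_self_of_inj_of_le N.injective_subtype (hVleN j hjs)
  haveI : IsSimpleModule A (p' j) := IsSimpleModule.congr ej
  set g : p' j →ₗ[A] U' := π ∘ₗ (p' j).subtype with hgdef
  have hgx : g ⟨x, hx⟩ = π x := rfl
  have hginj : Function.Injective g := by
    rw [← LinearMap.ker_eq_bot]
    rcases eq_bot_or_eq_top (LinearMap.ker g) with h | h
    · exact h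
    · exfalso
      apply hπx
      rw [← hgx]
      have : (⟨x, hx⟩ : p' j) ∈ LinearMap.ker g := h ▸ Submodule.mem_top
      exact this
  have hgsur : Function.Surjective g := by
    rw [← LinearMap.range_eq_top]
    rcases eq_bot_or_eq_top (LinearMap.range g) with h | h
    · exfalso
      apply hπx
      rw [← hgx]
      have : g ⟨x, hx⟩ ∈ LinearMap.range g := LinearMap.mem_range_self _ _
      rw [h] at this
      simpa using this
    · exact h
  exact ⟨j, hjs, ⟨e0.symm.trans (((LinearEquiv.ofBijective g ⟨hginj, hgsur⟩).symm).trans ej)⟩⟩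

end SimpleAux

section Indep

variable {A : Type u} [Ring A]

theorem aux_indep {M : Type u} [AddCommGroup M] [Module A M] {n : ℕ}
    (V : Fin n → Submodule A M) (hs : ∀ i, IsSimpleModule A (V i))
    (hpw : ∀ i j, i ≠ j → IsEmpty ((V i) ≃ₗ[A] (V j))) : iSupIndep V := by
  rw [iSupIndep_def]
  intro i
  have hatom : IsAtom (V i) := isSimpleModule_iff_isAtom.mp (hs i)
  rw [disjoint_iff]
  by_contra hne
  have hle : V i ≤ ⨆ (j) (_ : j ≠ i), V j := by
    have h1 : V i ⊓ (⨆ (j) (_ : j ≠ i), V j) ≤ V i := inf_le_left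
    rcases lt_or_eq_of_le h1 with h | h
    · exact absurd (hatom.2 _ h) hne
    · rw [← h]; exact inf_le_right
  have : ∃ j ∈ {j | j ≠ i}, Nonempty ((V i : Submodule A M) ≃ₗ[A] V j) :=
    aux_simple_le_biSup {j | j ≠ i} V (fun j _ => hs j) (V i) (hs i) hle
  obtain ⟨j, hj, ⟨q⟩⟩ := this
  exact (hpw i j (Ne.symm hj)).false q

end Indep

section Dual

variable (k A : Type u) [Field k] [Ring A] [Algebra k A]

/-- The `k`-linear dual of `A`, regarded as a left `A`-module via `(a • f) x = f (x * a)`. -/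
def ADual : Type u := A →ₗ[k] k

instance : AddCommGroup (ADual k A) := inferInstanceAs (AddCommGroup (A →ₗ[k] k))
instance : Module k (ADual k A) := inferInstanceAs (Module k (A →ₗ[k] k))

variable {k A}

/-- Interpret an element of `ADual` as a linear map. -/
def ADual.lin (f : ADual k A) : A →ₗ[k] k := f

/-- Build an element of `ADual` from a linear map. -/
def ADual.of (f : A →ₗ[k] k) : ADual k A := f

theorem ADual.lin_injective : Function.Injective (ADual.lin (k := k) (A := A)) := fun _ _ h => h

@[simp] theorem ADual.lin_of (f : A →ₗ[k] k) : (ADual.of f).lin = f := rfl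

@[simp] theorem ADual.lin_add (f g : ADual k A) : (f + g).lin = f.lin + g.lin := rfl
@[simp] theorem ADual.lin_zero : (0 : ADual k A).lin = 0 := rfl
@[simp] theorem ADual.lin_ksmul (c : k) (f : ADual k A) : (c • f).lin = c • f.lin := rfl

instance : SMul A (ADual k A) :=
  ⟨fun a f => ADual.of ((ADual.lin f) ∘ₗ LinearMap.mulRight k a)⟩

@[simp] theorem ADual.lin_smul (a : A) (f : ADual k A) (x : A) :
    (a • f).lin x = f.lin (x * a) := rfl

instance : Module A (ADual k A) where
  smul a f := a • f
  one_smul f := ADual.lin_injective <| LinearMap.ext fun x => by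
    rw [ADual.lin_smul, mul_one]
  mul_smul a b f := ADual.lin_injective <| LinearMap.ext fun x => by
    simp only [ADual.lin_smul, mul_assoc]
  smul_zero a := ADual.lin_injective <| LinearMap.ext fun x => by
    simp only [ADual.lin_smul, ADual.lin_zero, LinearMap.zero_apply]
  smul_add a f g := ADual.lin_injective <| LinearMap.ext fun x => by
    simp only [ADual.lin_smul, ADual.lin_add, LinearMap.add_apply]
  add_smul a b f := ADual.lin_injective <| LinearMap.ext fun x => by
    simp only [ADual.lin_smul, ADual.lin_add, LinearMap.add_apply, mul_add, map_add]
  zero_smul f := ADual.lin_injective <| LinearMap.ext fun x => by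
    simp only [ADual.lin_smul, ADual.lin_zero, LinearMap.zero_apply, mul_zero, map_zero]

theorem ADual.algebraMap_smul_eq (c : k) (d : ADual k A) :
    (algebraMap k A c) • d = c • d := by
  apply ADual.lin_injective
  apply LinearMap.ext
  intro y
  rw [ADual.lin_smul, ADual.lin_ksmul, LinearMap.smul_apply, smul_eq_mul,
    ← Algebra.commutes c y, ← Algebra.smul_def, map_smul, smul_eq_mul]

end Dual

section Baer

variable (k A : Type u) [Field k] [Ring A] [Algebra k A]

theorem adual_baer : Module.Baer A (ADual k A) := by
  intro I g
  classical
  set Ik : Submodule k A := I.restrictScalars k with hIk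
  let φ : Ik →ₗ[k] k :=
    { toFun := fun x => (g ⟨x.1, x.2⟩).lin 1
      map_add' := fun x y => by
        show (g ⟨(x + y).1, (x + y).2⟩).lin 1 = (g ⟨x.1, x.2⟩).lin 1 + (g ⟨y.1, y.2⟩).lin 1
        have h0 : (⟨(x + y).1, (x + y).2⟩ : I) = ⟨x.1, x.2⟩ + ⟨y.1, y.2⟩ := rfl
        rw [h0, map_add, ADual.lin_add, LinearMap.add_apply]
      map_smul' := fun c x => by
        show (g ⟨(c • x).1, (c • x).2⟩).lin 1 = c • (g ⟨x.1, x.2⟩).lin 1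
        have h1 : (⟨(c • x).1, (c • x).2⟩ : I) = (algebraMap k A c) • ⟨x.1, x.2⟩ := by
          apply Subtype.ext
          simp [Algebra.smul_def]
        rw [h1, map_smul, ADual.lin_smul, one_mul, Algebra.algebraMap_eq_smul_one,
          map_smul, smul_eq_mul] }
  obtain ⟨q, hq⟩ := Submodule.exists_isCompl Ik
  let ψ : A →ₗ[k] k := φ ∘ₗ Submodule.projectionOnto Ik q hq
  have hψ : ∀ (x : A) (hx : x ∈ Ik), ψ x = φ ⟨x, hx⟩ := fun x hx => by
    show φ _ = φ _
    rw [Submodule.projectionOnto_apply_left hq ⟨x, hx⟩]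
  refine ⟨{ toFun := fun a => ADual.of (ψ ∘ₗ LinearMap.mulRight k a)
            map_add' := fun a b => ?_
            map_smul' := fun b a => ?_ }, fun x hx => ?_⟩
  · apply ADual.lin_injective
    apply LinearMap.ext
    intro y
    simp [mul_add]
  · apply ADual.lin_injective
    apply LinearMap.ext
    intro y
    simp [smul_eq_mul, mul_assoc]
  · apply ADual.lin_injective
    apply LinearMap.ext
    intro y
    have hyx : y * x ∈ I := I.smul_mem y hx
    have h2 : (⟨y * x, hyx⟩ : I) = y • ⟨x, hx⟩ := rfl
    show ψ (y * x) = (g ⟨x, hx⟩).lin y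
    rw [hψ (y * x) hyx]
    show (g ⟨y * x, hyx⟩).lin 1 = (g ⟨x, hx⟩).lin y
    rw [h2, map_smul, ADual.lin_smul, one_mul]

end Baer

section Embed

variable (k A : Type u) [Field k] [Ring A] [Algebra k A]

theorem exists_injective_to_adual (M : Type u) [AddCommGroup M] [Module A M]
    (hM : IsSimpleModule A M) : ∃ f : M →ₗ[A] ADual k A, Function.Injective f := by
  letI : Module k M := Module.compHom M (algebraMap k A)
  have hks : ∀ (c : k) (y : M), c • y = (algebraMap k A c) • y := fun _ _ => rfl
  haveI : IsSimpleModule A M := hM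
  haveI : Nontrivial M := IsSimpleModule.nontrivial A M
  obtain ⟨s, hs⟩ := exists_ne (0 : M)
  have hφ : ∃ φ : Module.Dual k M, φ s ≠ 0 := by
    by_contra hcon
    push_neg at hcon
    exact hs ((Module.forall_dual_apply_eq_zero_iff k s).mp hcon)
  obtain ⟨φ, hφs⟩ := hφ
  let F : M →ₗ[A] ADual k A :=
    { toFun := fun m => ADual.of
        { toFun := fun a => φ (a • m)
          map_add' := fun a b => by
            show φ ((a + b) • m) = φ (a • m) + φ (b • m)
            rw [add_smul, map_add]
          map_smul' := fun c a => by
            show φ ((c • a) • m) = c • φ (a • m)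
            rw [Algebra.smul_def, mul_smul, ← hks, map_smul] }
      map_add' := fun m m' => by
        apply ADual.lin_injective
        apply LinearMap.ext
        intro a
        show φ (a • (m + m')) = φ (a • m) + φ (a • m')
        rw [smul_add, map_add]
      map_smul' := fun b m => by
        apply ADual.lin_injective
        apply LinearMap.ext
        intro a
        show φ (a • (b • m)) = φ ((a * b) • m)
        rw [mul_smul] }
  have hF1 : F s ≠ 0 := by
    intro h
    have : (F s).lin 1 = 0 := by rw [h]; rfl
    rw [show (F s).lin 1 = φ ((1 : A) • s) from rfl, one_smul] at this
    exact hφs this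
  refine ⟨F, ?_⟩
  rw [← LinearMap.ker_eq_bot]
  rcases eq_bot_or_eq_top (LinearMap.ker F) with h | h
  · exact h
  · exfalso
    apply hF1
    have : s ∈ LinearMap.ker F := h ▸ Submodule.mem_top
    exact this

end Embed

theorem injective_of_equiv {R Q Q' : Type u} [Ring R] [AddCommGroup Q] [AddCommGroup Q']
    [Module R Q] [Module R Q'] (e : Q ≃ₗ[R] Q') (h : Module.Injective R Q) :
    Module.Injective R Q' :=
  ⟨fun X Y _ _ _ _ f hf g => by
    obtain ⟨h', hh⟩ := h.out f hf (e.symm.toLinearMap ∘ₗ g)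
    refine ⟨e.toLinearMap ∘ₗ h', fun x => ?_⟩
    have := hh x
    simp only [LinearMap.coe_comp, Function.comp_apply, LinearEquiv.coe_coe] at this ⊢
    rw [this, LinearEquiv.apply_symm_apply]⟩

/-- Let `A` be a basic finite-dimensional algebra over a field `k` with simple left
`A`-modules `S 0, …, S (n-1)` (a complete set of representatives of isomorphism classes).
If the socle of the left module `A` is isomorphic to a submodule of `S 0 ⊕ ⋯ ⊕ S (n-1)`,
then `A` is self-injective. -/
theorem selfinjective_of_socle_embeds_in_directSum_of_simples
    (k A : Type u) [Field k] [Ring A] [Algebra k A] [FiniteDimensional k A]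
    (hbasic : IsBasic A)
    (n : ℕ) (S : Fin n → Type u) [∀ i, AddCommGroup (S i)] [∀ i, Module A (S i)]
    (hsimple : ∀ i, IsSimpleModule A (S i))
    (hpairwise : ∀ i j, i ≠ j → IsEmpty (S i ≃ₗ[A] S j))
    (hcomplete : ∀ (T : Type u) [AddCommGroup T] [Module A T],
      IsSimpleModule A T → ∃ i, Nonempty (T ≃ₗ[A] S i))
    (hsocle : ∃ W : Submodule A (DirectSum (Fin n) S),
      Nonempty (socle A A ≃ₗ[A] W)) :
    Module.Injective A A := by
  classical
  obtain ⟨W, ⟨e⟩⟩ := hsocle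
  have hexists := fun i => exists_injective_to_adual k A (S i) (hsimple i)
  choose f hf using hexists
  let V : Fin n → Submodule A (ADual k A) := fun i => LinearMap.range (f i)
  let G : ∀ i, S i ≃ₗ[A] V i := fun i => LinearEquiv.ofInjective (f i) (hf i)
  have hVsimple : ∀ i, IsSimpleModule A (V i) := fun i =>
    haveI := hsimple i
    IsSimpleModule.congr (G i).symm
  have hVpw : ∀ i j, i ≠ j → IsEmpty ((V i) ≃ₗ[A] (V j)) := fun i j hij =>
    ⟨fun q => (hpairwise i j hij).false ((G i).trans (q.trans (G j).symm))⟩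
  have hindep : iSupIndep V := aux_indep V hVsimple hVpw
  let Ψ : (Π₀ i, V i) →ₗ[A] ADual k A := DFinsupp.lsum ℕ (fun i => (V i).subtype)
  have hΨ : Function.Injective Ψ := hindep.dfinsupp_lsum_injective
  let Θ : (Π₀ i, S i) ≃ₗ[A] Π₀ i, V i := DFinsupp.mapRange.linearEquiv G
  let Emb : (socle A A) →ₗ[A] ADual k A :=
    Ψ ∘ₗ Θ.toLinearMap ∘ₗ W.subtype ∘ₗ e.toLinearMap
  have hEmbInj : Function.Injective Emb := by
    have hcoe : ⇑Emb = ⇑Ψ ∘ ⇑Θ ∘ ⇑W.subtype ∘ ⇑e := rfl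
    rw [hcoe]
    exact hΨ.comp (Θ.injective.comp (W.injective_subtype.comp e.injective))
  haveI hinjD : Module.Injective A (ADual k A) := (adual_baer k A).injective
  obtain ⟨h, hh⟩ := hinjD.out (socle A A).subtype (socle A A).injective_subtype Emb
  have hker : LinearMap.ker h = ⊥ := by
    by_contra hne
    haveI : IsArtinian A A := isArtinian_of_tower k inferInstance
    haveI : IsAtomic (Submodule A A) := isAtomic_of_orderBot_wellFounded_lt IsWellFounded.wf
    obtain ⟨a, haatom, hale⟩ :=
      (IsAtomic.eq_bot_or_exists_atom_le (LinearMap.ker h)).resolve_left hne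
    have hasimple : IsSimpleModule A a := isSimpleModule_iff_isAtom.mpr haatom
    have hasoc : a ≤ socle A A := le_sSup hasimple
    obtain ⟨x, hxa, hx0⟩ := (Submodule.ne_bot_iff a).mp haatom.1
    have h1 : h x = 0 := hale hxa
    have h2 : Emb ⟨x, hasoc hxa⟩ = 0 := by rw [← hh ⟨x, hasoc hxa⟩]; exact h1
    have h3 : (⟨x, hasoc hxa⟩ : socle A A) = 0 := hEmbInj (by rw [h2, map_zero])
    exact hx0 (congrArg Subtype.val h3)
  have hsmulk : ∀ (c : k) (x : A), h (c • x) = c • h x := fun c x => by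
    rw [Algebra.smul_def, ← smul_eq_mul, map_smul, ADual.algebraMap_smul_eq]
  let hk : A →ₗ[k] ADual k A :=
    { toFun := h, map_add' := h.map_add, map_smul' := fun c x => hsmulk c x }
  haveI : FiniteDimensional k (ADual k A) :=
    inferInstanceAs (FiniteDimensional k (A →ₗ[k] k))
  have hdim : Module.finrank k (ADual k A) = Module.finrank k A :=
    Subspace.dual_finrank_eq
  have hkinj : Function.Injective hk := fun x y hxy =>
    (LinearMap.ker_eq_bot.mp hker) hxy
  have hrange : LinearMap.range hk = ⊤ :=
    Submodule.eq_top_of_finrank_eq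
      (by rw [LinearMap.finrank_range_of_inj hkinj, hdim])
  have hsurj : Function.Surjective h := fun y => by
    obtain ⟨x, hx⟩ := LinearMap.range_eq_top.mp hrange y
    exact ⟨x, hx⟩
  let E : A ≃ₗ[A] ADual k A :=
    LinearEquiv.ofBijective h ⟨LinearMap.ker_eq_bot.mp hker, hsurj⟩
  exact injective_of_equiv E.symm hinjD
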